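/- Let A ∈ 𝐒₊, f ≥ 0 a real number, and let λ be the smallest eigenvalue of A. Then the function Φ_{A,f} : [−f, ∞) → [−λ, ∞), δ ↦ H(A, f + δ), is well defined (its values lie in [−λ, ∞)), continuous, strictly monotonically increasing, and bijective from [−f, ∞) onto [−λ, ∞). -/

import Mathlib

open Matrix Set

/-- The set 𝐒₁ of positive semidefinite symmetric d×d real matrices with unit trace. -/
def S1set (d : ℕ) : Set (Matrix (Fin d) (Fin d) ℝ) :=
  {B | B.PosSemidef ∧ B.trace = 1}

/-- The value −B:A + f·(det B)^(1/d) appearing under the supremum of the Bellman operator. -/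
noncomputable def bval (d : ℕ) (A B : Matrix (Fin d) (Fin d) ℝ) (f : ℝ) : ℝ :=
  -((B * A).trace) + f * B.det ^ ((1 : ℝ) / d)

/-- The Bellman operator H(A,f) = sup_{B ∈ 𝐒₁} (−B:A + f·(det B)^(1/d)). -/
noncomputable def bellman (d : ℕ) (A : Matrix (Fin d) (Fin d) ℝ) (f : ℝ) : ℝ :=
  sSup ((fun B => bval d A B f) '' S1set d)

/-- The Monge–Ampère operator M(A,f) = (f/d)^d − det A. -/
noncomputable def MAop (d : ℕ) (A : Matrix (Fin d) (Fin d) ℝ) (f : ℝ) : ℝ :=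
  (f / d) ^ d - A.det

/-- The Hessian matrix D²φ(x) of φ : ℝ^d → ℝ at x. -/
noncomputable def hessianM (d : ℕ) (φ : (Fin d → ℝ) → ℝ) (x : Fin d → ℝ) :
    Matrix (Fin d) (Fin d) ℝ :=
  fun i j => iteratedFDeriv ℝ 2 φ x ![Pi.single i 1, Pi.single j 1]

section Aux

variable {d : ℕ} {A B : Matrix (Fin d) (Fin d) ℝ}

/-- Conjugation of a diagonal matrix by the eigenvector unitary of `A`. -/
noncomputable def gmat (hA : A.IsHermitian) (μ : Fin d → ℝ) : Matrix (Fin d) (Fin d) ℝ :=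
  (hA.eigenvectorUnitary : Matrix (Fin d) (Fin d) ℝ) * diagonal μ *
    star (hA.eigenvectorUnitary : Matrix (Fin d) (Fin d) ℝ)

lemma gmat_posSemidef (hA : A.IsHermitian) {μ : Fin d → ℝ} (hμ : ∀ i, 0 ≤ μ i) :
    (gmat hA μ).PosSemidef := by
  rw [gmat, Matrix.star_eq_conjTranspose]
  exact (posSemidef_diagonal_iff.mpr hμ).mul_mul_conjTranspose_same _

lemma trace_conj_unitary (U : Matrix.unitaryGroup (Fin d) ℝ) (M : Matrix (Fin d) (Fin d) ℝ) :
    ((U : Matrix (Fin d) (Fin d) ℝ) * M * star (U : Matrix (Fin d) (Fin d) ℝ)).trace = M.trace := by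
  rw [mul_assoc, trace_mul_comm, mul_assoc, Unitary.coe_star_mul_self, mul_one]

lemma gmat_trace (hA : A.IsHermitian) (μ : Fin d → ℝ) :
    (gmat hA μ).trace = ∑ i, μ i := by
  rw [gmat, trace_conj_unitary, trace_diagonal]

lemma gmat_det (hA : A.IsHermitian) (μ : Fin d → ℝ) :
    (gmat hA μ).det = ∏ i, μ i := by
  rw [gmat, det_mul, det_mul, mul_comm, ← mul_assoc, ← det_mul, Unitary.coe_star_mul_self,
    det_one, one_mul, det_diagonal]

lemma gmat_mul_trace (hA : A.IsHermitian) (μ : Fin d → ℝ) :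
    (gmat hA μ * A).trace = ∑ i, μ i * hA.eigenvalues i := by
  rw [gmat, mul_assoc (_ * diagonal μ), trace_mul_comm, ← mul_assoc,
    (by have h := hA.conjStarAlgAut_star_eigenvectorUnitary; rwa [Unitary.conjStarAlgAut_star_apply] at h :
      star (hA.eigenvectorUnitary : Matrix (Fin d) (Fin d) ℝ) * A * (hA.eigenvectorUnitary : Matrix (Fin d) (Fin d) ℝ) =
        Matrix.diagonal (RCLike.ofReal ∘ hA.eigenvalues)), diagonal_mul_diagonal, trace_diagonal]
  simp [RCLike.ofReal_real_eq_id, mul_comm]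

lemma trace_eq_sum_eig (hA : A.IsHermitian) : A.trace = ∑ i, hA.eigenvalues i := by
  conv_lhs => rw [hA.spectral_theorem, Unitary.conjStarAlgAut_apply]
  rw [mul_assoc, trace_mul_comm, mul_assoc, Unitary.coe_star_mul_self, mul_one, trace_diagonal]
  simp [RCLike.ofReal_real_eq_id]

lemma psd_trace_nonneg (hB : B.PosSemidef) : 0 ≤ B.trace := by
  rw [trace_eq_sum_eig hB.isHermitian]
  exact Finset.sum_nonneg fun i _ => hB.eigenvalues_nonneg i

lemma det_eq_prod_eig (hA : A.IsHermitian) : A.det = ∏ i, hA.eigenvalues i := by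
  have := hA.det_eq_prod_eigenvalues
  simpa using this

lemma psd_det_nonneg (hB : B.PosSemidef) : 0 ≤ B.det := by
  rw [det_eq_prod_eig hB.isHermitian]
  exact Finset.prod_nonneg fun i _ => hB.eigenvalues_nonneg i

lemma psd_det_le_one (hB : B.PosSemidef) (htr : B.trace = 1) : B.det ≤ 1 := by
  rw [det_eq_prod_eig hB.isHermitian]
  apply Finset.prod_le_one (fun i _ => hB.eigenvalues_nonneg i)
  intro i _
  calc hB.isHermitian.eigenvalues i ≤ ∑ j, hB.isHermitian.eigenvalues j :=
        Finset.single_le_sum (fun j _ => hB.eigenvalues_nonneg j) (Finset.mem_univ i)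
    _ = 1 := by rw [← trace_eq_sum_eig hB.isHermitian, htr]

lemma trace_mul_psd_nonneg (hB : B.PosSemidef) (hA : A.PosSemidef) : 0 ≤ (B * A).trace := by
  obtain ⟨C, rfl⟩ : ∃ C : Matrix (Fin d) (Fin d) ℝ, B = Cᴴ * C := by
    open scoped MatrixOrder in
    exact ⟨CFC.sqrt B, by rw [← star_eq_conjTranspose, (CFC.sqrt_nonneg B).isSelfAdjoint.star_eq, CFC.sqrt_mul_sqrt_self B hB.nonneg]⟩
  rw [show (Cᴴ * C * A).trace = (C * A * Cᴴ).trace from (trace_mul_cycle C A Cᴴ).symm]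
  exact psd_trace_nonneg (hA.mul_mul_conjTranspose_same C)

lemma sub_smul_one_eq_gmat (hA : A.IsHermitian) (lam : ℝ) :
    A - lam • 1 = gmat hA (fun i => hA.eigenvalues i - lam) := by
  have hU : (hA.eigenvectorUnitary : Matrix (Fin d) (Fin d) ℝ) *
      star (hA.eigenvectorUnitary : Matrix (Fin d) (Fin d) ℝ) = 1 :=
    (Matrix.mem_unitaryGroup_iff).mp hA.eigenvectorUnitary.2
  have h2 : Matrix.diagonal (fun i => hA.eigenvalues i - lam) =
      Matrix.diagonal (RCLike.ofReal ∘ hA.eigenvalues) - lam • (1 : Matrix (Fin d) (Fin d) ℝ) := by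
    ext i j
    rcases eq_or_ne i j with rfl | hij
    · simp [Matrix.one_apply, RCLike.ofReal_real_eq_id]
    · simp [Matrix.diagonal_apply_ne _ hij, Matrix.one_apply_ne hij]
  rw [gmat, h2, mul_sub, sub_mul]
  congr 1
  · exact hA.spectral_theorem
  · rw [Matrix.mul_smul, mul_one, Matrix.smul_mul, hU]

lemma lam_le_trace_mul (hA : A.IsHermitian) {lam : ℝ}
    (hlam : ∀ i, lam ≤ hA.eigenvalues i) (hB : B.PosSemidef) (htr : B.trace = 1) :
    lam ≤ (B * A).trace := by
  have hpsd : (A - lam • 1).PosSemidef := by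
    rw [sub_smul_one_eq_gmat hA lam]
    exact gmat_posSemidef hA fun i => sub_nonneg.mpr (hlam i)
  have h0 : 0 ≤ (B * (A - lam • 1)).trace := trace_mul_psd_nonneg hB hpsd
  rw [mul_sub, trace_sub, Matrix.mul_smul, mul_one, trace_smul, htr, smul_eq_mul, mul_one,
    sub_nonneg] at h0
  exact h0

lemma gmat_mem (hA : A.IsHermitian) {μ : Fin d → ℝ} (hμ0 : ∀ i, 0 ≤ μ i)
    (hμ1 : ∑ i, μ i = 1) : gmat hA μ ∈ S1set d :=
  ⟨gmat_posSemidef hA hμ0, by rw [gmat_trace, hμ1]⟩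

lemma bval_gmat (hA : A.IsHermitian) (μ : Fin d → ℝ) (g : ℝ) :
    bval d A (gmat hA μ) g = -(∑ i, μ i * hA.eigenvalues i) + g * (∏ i, μ i) ^ ((1 : ℝ) / d) := by
  rw [bval, gmat_mul_trace, gmat_det]

end Aux

section Bellman

variable {d : ℕ} {A : Matrix (Fin d) (Fin d) ℝ}

lemma detpow_mem (hd : 0 < d) {B : Matrix (Fin d) (Fin d) ℝ} (hB : B ∈ S1set d) :
    0 ≤ B.det ^ ((1 : ℝ) / d) ∧ B.det ^ ((1 : ℝ) / d) ≤ 1 := by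
  constructor
  · exact Real.rpow_nonneg (psd_det_nonneg hB.1) _
  · exact Real.rpow_le_one (psd_det_nonneg hB.1) (psd_det_le_one hB.1 hB.2)
      (by positivity)

lemma bellman_bddAbove (hd : 0 < d) (hA : A.PosSemidef) {g : ℝ} (hg : 0 ≤ g) :
    BddAbove ((fun B => bval d A B g) '' S1set d) := by
  refine ⟨g, fun v hv => ?_⟩
  obtain ⟨B, hB, rfl⟩ := hv
  have h1 := trace_mul_psd_nonneg hB.1 hA
  have h2 := detpow_mem hd hB
  have : g * B.det ^ ((1 : ℝ) / d) ≤ g * 1 := mul_le_mul_of_nonneg_left h2.2 hg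
  simp only [bval]
  nlinarith

lemma bellman_nonempty (hd : 0 < d) (hA : A.PosSemidef) (g : ℝ) :
    ((fun B => bval d A B g) '' S1set d).Nonempty := by
  refine ⟨_, ⟨gmat hA.isHermitian (fun _ => (d : ℝ)⁻¹), ?_, rfl⟩⟩
  refine gmat_mem _ (fun _ => by positivity) ?_
  rw [Finset.sum_const, Finset.card_univ, Fintype.card_fin, nsmul_eq_mul]
  field_simp

lemma bval_le_bellman (hd : 0 < d) (hA : A.PosSemidef) {g : ℝ} (hg : 0 ≤ g)
    {B : Matrix (Fin d) (Fin d) ℝ} (hB : B ∈ S1set d) :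
    bval d A B g ≤ bellman d A g :=
  le_csSup (bellman_bddAbove hd hA hg) (Set.mem_image_of_mem _ hB)

lemma bellman_le (hd : 0 < d) (hA : A.PosSemidef) {lam : ℝ}
    (hlam : ∀ i, lam ≤ hA.isHermitian.eigenvalues i) {g : ℝ} (hg : 0 ≤ g) :
    bellman d A g ≤ -lam + g := by
  apply csSup_le (bellman_nonempty hd hA g)
  rintro v ⟨B, hB, rfl⟩
  have h1 := lam_le_trace_mul hA.isHermitian hlam hB.1 hB.2
  have h2 := detpow_mem hd hB
  have : g * B.det ^ ((1 : ℝ) / d) ≤ g * 1 := mul_le_mul_of_nonneg_left h2.2 hg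
  simp only [bval]
  nlinarith

lemma bellman_ge_neg_lam (hd : 2 ≤ d) (hA : A.PosSemidef) {lam : ℝ} {i0 : Fin d}
    (hi0 : hA.isHermitian.eigenvalues i0 = lam) {g : ℝ} (hg : 0 ≤ g) :
    -lam ≤ bellman d A g := by
  have hd0 : 0 < d := by omega
  set μ : Fin d → ℝ := fun j => if j = i0 then 1 else 0 with hμ
  have hmem : gmat hA.isHermitian μ ∈ S1set d :=
    gmat_mem _ (fun i => by by_cases h : i = i0 <;> simp [hμ, h])
      (by simp [hμ, Finset.sum_ite_eq'])
  have hval : bval d A (gmat hA.isHermitian μ) g = -lam := by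
    rw [bval_gmat]
    have hsum : ∑ i, μ i * hA.isHermitian.eigenvalues i = lam := by
      rw [show (fun i => μ i * hA.isHermitian.eigenvalues i) =
        (fun i => if i = i0 then hA.isHermitian.eigenvalues i else 0) from by
          funext i; by_cases h : i = i0 <;> simp [hμ, h]]
      simp [hi0]
    obtain ⟨j, hj⟩ : ∃ j : Fin d, j ≠ i0 := by
      refine ⟨if h : (i0 : ℕ) = 0 then ⟨1, by omega⟩ else ⟨0, by omega⟩, ?_⟩
      split <;> rename_i h <;>
        (intro hc; apply_fun Fin.val at hc; simp at hc; omega)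
    have hprod : ∏ i, μ i = 0 := Finset.prod_eq_zero (Finset.mem_univ j) (by simp [hμ, hj])
    rw [hsum, hprod, Real.zero_rpow (by positivity), mul_zero, add_zero]
  calc -lam = bval d A (gmat hA.isHermitian μ) g := hval.symm
    _ ≤ bellman d A g := bval_le_bellman hd0 hA hg hmem

lemma bellman_ge_lin (hd : 0 < d) (hA : A.PosSemidef) {g : ℝ} (hg : 0 ≤ g) :
    -(A.trace / d) + g / d ≤ bellman d A g := by
  set μ : Fin d → ℝ := fun _ => (d : ℝ)⁻¹ with hμ
  have hd' : (d : ℝ) ≠ 0 := Nat.cast_ne_zero.mpr hd.ne'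
  have hmem : gmat hA.isHermitian μ ∈ S1set d := by
    refine gmat_mem _ (fun _ => by positivity) ?_
    rw [hμ, Finset.sum_const, Finset.card_univ, Fintype.card_fin, nsmul_eq_mul]
    field_simp
  have hval : bval d A (gmat hA.isHermitian μ) g = -(A.trace / d) + g / d := by
    rw [bval_gmat]
    have hsum : ∑ i, μ i * hA.isHermitian.eigenvalues i = A.trace / d := by
      rw [trace_eq_sum_eig hA.isHermitian, ← Finset.mul_sum]
      field_simp [hμ]
    have hprod : ∏ i, μ i = ((d : ℝ)⁻¹) ^ d := by
      simp [hμ]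
    have hpow : (((d : ℝ)⁻¹) ^ d) ^ ((1 : ℝ) / d) = (d : ℝ)⁻¹ := by
      rw [one_div, Real.pow_rpow_inv_natCast (by positivity) hd.ne']
    rw [hsum, hprod, hpow]
    ring
  calc -(A.trace / d) + g / d = bval d A (gmat hA.isHermitian μ) g := hval.symm
    _ ≤ bellman d A g := bval_le_bellman hd hA hg hmem

lemma bellman_lip (hd : 0 < d) (hA : A.PosSemidef) {g1 g2 : ℝ} (hg1 : 0 ≤ g1) (hg2 : 0 ≤ g2) :
    bellman d A g1 ≤ bellman d A g2 + |g1 - g2| := by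
  apply csSup_le (bellman_nonempty hd hA g1)
  rintro v ⟨B, hB, rfl⟩
  have h2 := detpow_mem hd hB
  have hb : bval d A B g1 = bval d A B g2 + (g1 - g2) * B.det ^ ((1 : ℝ) / d) := by
    simp only [bval]; ring
  have habs : (g1 - g2) * B.det ^ ((1 : ℝ) / d) ≤ |g1 - g2| := by
    calc (g1 - g2) * B.det ^ ((1 : ℝ) / d) ≤ |g1 - g2| * B.det ^ ((1 : ℝ) / d) :=
          mul_le_mul_of_nonneg_right (le_abs_self _) h2.1
      _ ≤ |g1 - g2| * 1 := mul_le_mul_of_nonneg_left h2.2 (abs_nonneg _)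
      _ = |g1 - g2| := mul_one _
  have := bval_le_bellman hd hA hg2 hB
  linarith

end Bellman

set_option maxHeartbeats 2000000 in
lemma bellman_strict (hd : 2 ≤ d) (hA : A.PosSemidef) {lam : ℝ} {i0 : Fin d}
    (hi0 : hA.isHermitian.eigenvalues i0 = lam)
    (hlam : ∀ i, lam ≤ hA.isHermitian.eigenvalues i)
    {g1 g2 : ℝ} (hg1 : 0 ≤ g1) (h12 : g1 < g2) :
    bellman d A g1 < bellman d A g2 := by
  have hd0 : 0 < d := by omega
  have hdR : (2 : ℝ) ≤ (d : ℝ) := by exact_mod_cast hd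
  have hg2 : 0 < g2 := lt_of_le_of_lt hg1 h12
  have hlam0 : 0 ≤ lam := hi0 ▸ hA.eigenvalues_nonneg i0
  have htrA : 0 ≤ A.trace := psd_trace_nonneg hA
  set C : ℝ := A.trace + g1 + 1 with hCdef
  have hC : 0 < C := by positivity
  set u : ℝ := min (1 / (2 * d)) (g2 / (4 * C)) with hudef
  have hu0 : 0 < u := lt_min (by positivity) (by positivity)
  have hu1 : u ≤ 1 / (2 * (d : ℝ)) := min_le_left _ _
  have hu2 : u ≤ g2 / (4 * C) := min_le_right _ _
  have huone : u ≤ 1 := hu1.trans (by rw [div_le_one (by positivity)]; nlinarith)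
  set s : ℝ := u ^ d with hsdef
  have hs0 : 0 < s := pow_pos hu0 d
  have hsu : s ≤ u := pow_le_of_le_one hu0.le huone (by omega)
  have hds : ((d : ℝ) - 1) * s ≤ 1 / 2 := by
    have hdu : (d : ℝ) * u ≤ 1 / 2 := by
      rw [le_div_iff₀ (by positivity)] at hu1
      nlinarith
    nlinarith
  set μ : Fin d → ℝ := fun j => if j = i0 then 1 - ((d : ℝ) - 1) * s else s with hμdef
  have hμ0 : ∀ j, 0 ≤ μ j := by
    intro j
    by_cases h : j = i0 <;> simp [hμdef, h] <;> linarith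
  have hcast : ((d - 1 : ℕ) : ℝ) = (d : ℝ) - 1 := by
    rw [Nat.cast_sub (by omega)]; norm_num
  have herase_sum : ∑ j ∈ Finset.univ.erase i0, μ j = ((d : ℝ) - 1) * s := by
    rw [Finset.sum_congr rfl (fun j hj => show μ j = s by
      simp [hμdef, Finset.ne_of_mem_erase hj]), Finset.sum_const,
      Finset.card_erase_of_mem (Finset.mem_univ i0), Finset.card_univ, Fintype.card_fin,
      nsmul_eq_mul, hcast]
  have hsum1 : ∑ j, μ j = 1 := by
    rw [← Finset.add_sum_erase _ μ (Finset.mem_univ i0), herase_sum]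
    simp [hμdef]
  have hsum_eig : ∑ j, μ j * hA.isHermitian.eigenvalues j ≤ lam + s * A.trace := by
    rw [← Finset.add_sum_erase _ _ (Finset.mem_univ i0)]
    have h1 : μ i0 * hA.isHermitian.eigenvalues i0 ≤ lam := by
      have : μ i0 ≤ 1 := by simp [hμdef]; nlinarith
      rw [hi0]
      nlinarith [hμ0 i0]
    have h2 : ∑ j ∈ Finset.univ.erase i0, μ j * hA.isHermitian.eigenvalues j
        ≤ s * A.trace := by
      rw [Finset.sum_congr rfl (fun j hj => show μ j * hA.isHermitian.eigenvalues j
          = s * hA.isHermitian.eigenvalues j by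
        simp [hμdef, Finset.ne_of_mem_erase hj]), ← Finset.mul_sum]
      have hsub : ∑ j ∈ Finset.univ.erase i0, hA.isHermitian.eigenvalues j ≤ A.trace := by
        rw [trace_eq_sum_eig hA.isHermitian]
        exact Finset.sum_le_sum_of_subset_of_nonneg (Finset.subset_univ _)
          (fun j _ _ => hA.eigenvalues_nonneg j)
      nlinarith
    linarith
  have hprod : ∏ j, μ j = (1 - ((d : ℝ) - 1) * s) * s ^ (d - 1) := by
    rw [← Finset.mul_prod_erase _ μ (Finset.mem_univ i0),
      Finset.prod_congr rfl (fun j hj => show μ j = s by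
        simp [hμdef, Finset.ne_of_mem_erase hj]), Finset.prod_const,
      Finset.card_erase_of_mem (Finset.mem_univ i0), Finset.card_univ, Fintype.card_fin]
    simp [hμdef]
  have hdetlow : (1 / 2 : ℝ) * s ^ (d - 1) ≤ ∏ j, μ j := by
    rw [hprod]
    nlinarith [pow_nonneg hs0.le (d - 1)]
  have hpowid : ((s) ^ (d - 1)) ^ ((1 : ℝ) / d) = u ^ (d - 1) := by
    rw [hsdef, ← pow_mul, mul_comm d (d - 1), pow_mul, one_div,
      Real.pow_rpow_inv_natCast (by positivity) (by omega)]
  have hhalf : (1 / 2 : ℝ) ≤ (1 / 2 : ℝ) ^ ((1 : ℝ) / d) := by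
    have h := Real.rpow_le_rpow_of_exponent_ge (x := (1 / 2 : ℝ)) (by norm_num) (by norm_num)
      (show (1 : ℝ) / d ≤ 1 by
        rw [div_le_one (by positivity)]
        exact_mod_cast Nat.one_le_cast.mpr (by omega))
    simpa using h
  have hclow : (1 / 2 : ℝ) * u ^ (d - 1) ≤ (∏ j, μ j) ^ ((1 : ℝ) / d) := by
    calc (1 / 2 : ℝ) * u ^ (d - 1) ≤ (1 / 2 : ℝ) ^ ((1 : ℝ) / d) * u ^ (d - 1) :=
          mul_le_mul_of_nonneg_right hhalf (by positivity)
      _ = (1 / 2 : ℝ) ^ ((1 : ℝ) / d) * (s ^ (d - 1)) ^ ((1 : ℝ) / d) := by rw [hpowid]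
      _ = ((1 / 2 : ℝ) * s ^ (d - 1)) ^ ((1 : ℝ) / d) :=
          (Real.mul_rpow (by norm_num) (by positivity)).symm
      _ ≤ (∏ j, μ j) ^ ((1 : ℝ) / d) :=
          Real.rpow_le_rpow (by positivity) hdetlow (by positivity)
  have hCu : C * u ≤ g2 / 4 := by
    rw [le_div_iff₀ (by positivity)] at hu2
    nlinarith
  have hssplit : s = u ^ (d - 1) * u := by
    rw [hsdef, ← pow_succ]; congr 1; omega
  have hpen : (A.trace + g1) * s ≤ g2 / 4 * u ^ (d - 1) := by
    have h1 : (A.trace + g1) * s ≤ C * s := by nlinarith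
    have h2 : C * s = C * u * u ^ (d - 1) := by rw [hssplit]; ring
    nlinarith [pow_nonneg hu0.le (d - 1)]
  set m : ℝ := min ((g2 - g1) * s) (g2 / 4 * u ^ (d - 1)) with hmdef
  have hm0 : 0 < m := lt_min (by nlinarith) (by positivity)
  have hgood := bval_le_bellman hd0 hA hg2.le (gmat_mem hA.isHermitian hμ0 hsum1)
  rw [bval_gmat] at hgood
  have hgood2 : -lam - s * A.trace + g2 * ((1 / 2) * u ^ (d - 1)) ≤ bellman d A g2 := by
    have := mul_le_mul_of_nonneg_left hclow hg2.le
    linarith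
  have key : ∀ B ∈ S1set d, bval d A B g1 + m ≤ bellman d A g2 := by
    intro B hB
    have hc := detpow_mem hd0 hB
    by_cases hcs : s ≤ B.det ^ ((1 : ℝ) / d)
    · have h := bval_le_bellman hd0 hA hg2.le hB
      have hble : bval d A B g1 + (g2 - g1) * s ≤ bval d A B g2 := by
        simp only [bval]
        nlinarith
      have : m ≤ (g2 - g1) * s := min_le_left _ _
      linarith
    · push_neg at hcs
      have h1 : lam ≤ (B * A).trace := lam_le_trace_mul hA.isHermitian hlam hB.1 hB.2
      have hble : bval d A B g1 ≤ -lam + g1 * s := by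
        simp only [bval]
        nlinarith [hc.1]
      have hm2 : m ≤ g2 / 4 * u ^ (d - 1) := min_le_right _ _
      have : -lam + g1 * s + m ≤ -lam - s * A.trace + g2 * ((1 / 2) * u ^ (d - 1)) := by
        nlinarith
      linarith
  have hle : bellman d A g1 ≤ bellman d A g2 - m := by
    apply csSup_le (bellman_nonempty hd0 hA g1)
    rintro v ⟨B, hB, rfl⟩
    have := key B hB
    linarith
  linarith

/-- For PSD A with smallest eigenvalue λ and f ≥ 0, the map δ ↦ H(A, f+δ) is a
continuous, strictly increasing bijection from [−f,∞) onto [−λ,∞). -/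
theorem stmt_4 (d : ℕ) (hd : 2 ≤ d) (A : Matrix (Fin d) (Fin d) ℝ) (hA : A.PosSemidef)
    (f : ℝ) (hf : 0 ≤ f) (lam : ℝ)
    (hlam_mem : ∃ i, hA.isHermitian.eigenvalues i = lam)
    (hlam_le : ∀ i, lam ≤ hA.isHermitian.eigenvalues i) :
    (∀ δ ∈ Set.Ici (-f), bellman d A (f + δ) ∈ Set.Ici (-lam)) ∧
    ContinuousOn (fun δ => bellman d A (f + δ)) (Set.Ici (-f)) ∧
    StrictMonoOn (fun δ => bellman d A (f + δ)) (Set.Ici (-f)) ∧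
    Set.BijOn (fun δ => bellman d A (f + δ)) (Set.Ici (-f)) (Set.Ici (-lam)) := by
  obtain ⟨i0, hi0⟩ := hlam_mem
  have hd0 : 0 < d := by omega
  have hdR : (0 : ℝ) < (d : ℝ) := by positivity
  have part1 : ∀ δ ∈ Set.Ici (-f), bellman d A (f + δ) ∈ Set.Ici (-lam) := by
    intro δ hδ
    have hg : 0 ≤ f + δ := by have := mem_Ici.mp hδ; linarith
    exact mem_Ici.mpr (bellman_ge_neg_lam hd hA hi0 hg)
  have cont : ContinuousOn (fun δ => bellman d A (f + δ)) (Set.Ici (-f)) := by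
    apply LipschitzOnWith.continuousOn (K := 1)
    apply LipschitzOnWith.of_dist_le_mul
    intro x hx y hy
    have hgx : 0 ≤ f + x := by have := mem_Ici.mp hx; linarith
    have hgy : 0 ≤ f + y := by have := mem_Ici.mp hy; linarith
    have h1 := bellman_lip hd0 hA hgx hgy
    have h2 := bellman_lip hd0 hA hgy hgx
    rw [Real.dist_eq, Real.dist_eq]
    have he : |f + x - (f + y)| = |x - y| := by ring_nf
    have he2 : |f + y - (f + x)| = |x - y| := by rw [abs_sub_comm]; ring_nf
    rw [he] at h1; rw [he2] at h2
    rw [NNReal.coe_one, one_mul, abs_sub_le_iff]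
    constructor <;> linarith
  have smono : StrictMonoOn (fun δ => bellman d A (f + δ)) (Set.Ici (-f)) := by
    intro x hx y hy hxy
    have hgx : 0 ≤ f + x := by have := mem_Ici.mp hx; linarith
    exact bellman_strict hd hA hi0 hlam_le hgx (by linarith)
  refine ⟨part1, cont, smono, ?_, smono.injOn, ?_⟩
  · intro δ hδ; exact part1 δ hδ
  · intro y hy
    have hy' : -lam ≤ y := mem_Ici.mp hy
    set b : ℝ := max (-f) ((d : ℝ) * (y + A.trace / d + 1) - f) with hbdef
    have hb1 : -f ≤ b := le_max_left _ _
    have hgb : 0 ≤ f + b := by linarith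
    have hΦb : y ≤ bellman d A (f + b) := by
      have hlin := bellman_ge_lin hd0 hA hgb
      have hb2 : (d : ℝ) * (y + A.trace / d + 1) - f ≤ b := le_max_right _ _
      have : (d : ℝ) * (y + A.trace / d + 1) ≤ f + b := by linarith
      have hdiv : y + A.trace / d + 1 ≤ (f + b) / d := by
        rw [le_div_iff₀ hdR]
        nlinarith
      have htr : 0 ≤ A.trace := psd_trace_nonneg hA
      nlinarith [hlin]
    have hΦa : bellman d A (f + -f) = -lam := by
      rw [add_neg_cancel]
      refine le_antisymm ?_ (bellman_ge_neg_lam hd hA hi0 le_rfl)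
      have := bellman_le hd0 hA hlam_le (le_refl (0 : ℝ))
      linarith
    have hsub := intermediate_value_Icc hb1 (cont.mono (Icc_subset_Ici_self))
    have hymem : y ∈ Icc ((fun δ => bellman d A (f + δ)) (-f)) ((fun δ => bellman d A (f + δ)) b) := by
      constructor
      · show bellman d A (f + -f) ≤ y
        rw [hΦa]; exact hy'
      · exact hΦb
    obtain ⟨δ, hδ, hδy⟩ := hsub hymem
    exact ⟨δ, Icc_subset_Ici_self hδ, hδy⟩
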